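/- Let κ be a regular uncountable cardinal and let (I_α)_{α<κ} be a continuous increasing chain of independent families of subsets of ℕ (so I_α ⊆ I_β for α ≤ β < κ, and I_β = ⋃_{α<β} I_α for every limit ordinal β < κ). Then fil(⋃_{α<κ} I_α) = ⋃_{α<κ} fil(I_α). -/

import Mathlib

open Set

/-- A family of subsets of ℕ is *independent* if all its members are infinite and
for all finite disjoint subfamilies `𝒜, ℬ ⊆ I` the set `⋂ 𝒜 \ ⋃ ℬ` is infinite. -/
def Indep (I : Set (Set ℕ)) : Prop :=
  (∀ A ∈ I, A.Infinite) ∧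
  ∀ 𝒜 ℬ : Finset (Set ℕ), ↑𝒜 ⊆ I → ↑ℬ ⊆ I → Disjoint 𝒜 ℬ →
    ((⋂ A ∈ 𝒜, A) \ (⋃ B ∈ ℬ, B)).Infinite

/-- `FF I h` : `h` is a finite partial function from `I` to `2`, coded as a finitely
supported `Option Bool`-valued function whose support consists of members of `I`. -/
def FF (I : Set (Set ℕ)) (h : Set ℕ → Option Bool) : Prop :=
  {A | h A ≠ none}.Finite ∧ ∀ A : Set ℕ, h A ≠ none → A ∈ I

/-- The Boolean combination `I^h` : intersection over the domain of `h` of `A` (if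
`h A = some false`, i.e. `h(A) = 0`) or of its complement (if `h A = some true`). -/
def BC (h : Set ℕ → Option Bool) : Set ℕ :=
  ⋂ A ∈ {A : Set ℕ | h A ≠ none}, (if h A = some false then A else Aᶜ)

/-- `ExtFF h h'` : the finite partial function `h'` extends `h`. -/
def ExtFF (h h' : Set ℕ → Option Bool) : Prop :=
  ∀ (A : Set ℕ) (b : Bool), h A = some b → h' A = some b

/-- `I` is densely maximal: for every infinite `X ⊆ ℕ` and every `h ∈ FF(I)` there is
`h' ⊇ h` in `FF(I)` with `I^{h'} \ X` finite or `I^{h'} ∩ X` finite. -/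
def DenselyMax (I : Set (Set ℕ)) : Prop :=
  ∀ X : Set ℕ, X.Infinite → ∀ h, FF I h →
    ∃ h', FF I h' ∧ ExtFF h h' ∧ ((BC h' \ X).Finite ∨ (BC h' ∩ X).Finite)

/-- The density filter `fil(I)`. -/
def densityFil (I : Set (Set ℕ)) : Set (Set ℕ) :=
  {X | ∀ h, FF I h → ∃ h', FF I h' ∧ ExtFF h h' ∧ (BC h' \ X).Finite}

/-- `I` is a maximal independent family. -/
def MaxIndep (I : Set (Set ℕ)) : Prop :=
  Indep I ∧ ¬ ∃ X : Set ℕ, X.Infinite ∧ X ∉ I ∧ Indep (insert X I)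

/-- A proper filter on ℕ, viewed as a collection of subsets of ℕ. -/
def ProperFilter (F : Set (Set ℕ)) : Prop :=
  ∅ ∉ F ∧ Set.univ ∈ F ∧ (∀ X ∈ F, ∀ Y : Set ℕ, X ⊆ Y → Y ∈ F) ∧
    ∀ X ∈ F, ∀ Y ∈ F, X ∩ Y ∈ F

/-- Every member of `F` has infinite intersection with every Boolean combination of `I`. -/
def DiagProp (I : Set (Set ℕ)) (F : Set (Set ℕ)) : Prop :=
  ∀ X ∈ F, ∀ h, FF I h → (X ∩ BC h).Infinite

/-- `F` is a diagonalization filter for `I` : a proper filter, maximal under inclusion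
among proper filters all of whose members meet every Boolean combination infinitely. -/
def DiagFilter (I F : Set (Set ℕ)) : Prop :=
  ProperFilter F ∧ DiagProp I F ∧
    ∀ G : Set (Set ℕ), ProperFilter G → DiagProp I G → F ⊆ G → G = F

/-- `F` is a P-filter (as a collection of sets): every countable subfamily has a
pseudointersection in `F`. -/
def IsPFilter (F : Set (Set ℕ)) : Prop :=
  ∀ A : ℕ → Set ℕ, (∀ n, A n ∈ F) → ∃ B ∈ F, ∀ n, (B \ A n).Finite

/-- `F` is a Q-filter: every partition of ℕ into finite sets has a semiselector in `F`. -/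
def IsQFilter (F : Set (Set ℕ)) : Prop :=
  ∀ J : ℕ → Set ℕ, (∀ n, (J n).Finite) → (∀ m n, m ≠ n → Disjoint (J m) (J n)) →
    (⋃ n, J n) = Set.univ → ∃ A ∈ F, ∀ n, (A ∩ J n).Subsingleton

/-- An independent family is selective if it is densely maximal and its density filter
is Ramsey (both a P-filter and a Q-filter). -/
def Selective (I : Set (Set ℕ)) : Prop :=
  Indep I ∧ DenselyMax I ∧ IsPFilter (densityFil I) ∧ IsQFilter (densityFil I)

-- auxiliary development for statement2
section Aux

universe u

lemma myBC_anti {g g' : Set ℕ → Option Bool} (H : ExtFF g g') : BC g' ⊆ BC g := by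
  intro x hx
  simp only [BC, Set.mem_iInter, Set.mem_setOf_eq] at hx ⊢
  intro A hA
  obtain ⟨b, hb⟩ := Option.ne_none_iff_exists'.mp hA
  have hb' := H A b hb
  have hx' := hx A (by simp [hb'])
  cases b with
  | false => rw [if_pos hb]; rwa [if_pos hb'] at hx'
  | true =>
    rw [if_neg (by simp [hb])]
    rwa [if_neg (by simp [hb'])] at hx'

/-- `B` is a bounded set of ordinals below `κ.ord`. -/
def myBdd (κ : Cardinal.{u}) (B : Set Ordinal) : Prop := ∃ γ < κ.ord, ∀ i ∈ B, i < γ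

/-- `B` is an unbounded subset of `κ.ord`. -/
def myUnbnd (κ : Cardinal.{u}) (B : Set Ordinal) : Prop := B ⊆ Set.Iio κ.ord ∧ ¬ myBdd κ B

lemma myBdd_mono {κ : Cardinal.{u}} {B B' : Set Ordinal} (h : B ⊆ B') (hB' : myBdd κ B') :
    myBdd κ B := by
  obtain ⟨γ, hγ, hb⟩ := hB'
  exact ⟨γ, hγ, fun i hi => hb i (h hi)⟩

lemma myUnbnd_exists {κ : Cardinal.{u}} (hal : Cardinal.aleph0 ≤ κ) {B : Set Ordinal}
    (hB : myUnbnd κ B) : ∀ γ < κ.ord, ∃ i ∈ B, γ < i := by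
  intro γ hγ
  have hγ1 : γ + 1 < κ.ord := (Cardinal.isSuccLimit_ord hal).add_one_lt hγ
  by_contra hc
  push_neg at hc
  exact hB.2 ⟨γ + 1, hγ1, fun i hi => lt_of_le_of_lt (hc i hi) (lt_add_one γ)⟩

lemma myBdd_of_not_unbnd {κ : Cardinal.{u}} {B : Set Ordinal} (hB : B ⊆ Set.Iio κ.ord)
    (h : ¬ myUnbnd κ B) : myBdd κ B := by
  by_contra hc
  exact h ⟨hB, hc⟩

lemma mySup_lt {κ : Cardinal.{u}} (hreg : κ.IsRegular) (hunc : Cardinal.aleph0 < κ)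
    {ι : Type} [Countable ι] (b : ι → Ordinal.{u}) (hb : ∀ i, b i < κ.ord) :
    (⨆ i, b i) < κ.ord := by
  have hcard : Cardinal.lift.{u, 0} (Cardinal.mk ι) < κ := by
    refine lt_of_le_of_lt ?_ hunc
    rw [← Cardinal.lift_aleph0.{u, 0}]
    exact Cardinal.lift_le.mpr Cardinal.mk_le_aleph0
  exact Cardinal.iSup_lt_ord_lift_of_isRegular hreg hcard hb

lemma myBdd_iUnion {κ : Cardinal.{u}} (hreg : κ.IsRegular) (hunc : Cardinal.aleph0 < κ)
    {ι : Type} [Countable ι]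
    {g : ι → Set Ordinal} (h : ∀ i, myBdd κ (g i)) : myBdd κ (⋃ i, g i) := by
  choose b hb hb' using h
  refine ⟨⨆ i, b i, mySup_lt hreg hunc b hb, ?_⟩
  · intro i hi
    obtain ⟨j, hj⟩ := Set.mem_iUnion.mp hi
    exact lt_of_lt_of_le (hb' j i hj) (Ordinal.le_iSup b j)

lemma myUnbnd_of_iUnion {κ : Cardinal.{u}} (hreg : κ.IsRegular) (hunc : Cardinal.aleph0 < κ)
    {ι : Type} [Countable ι] {g : ι → Set Ordinal} {S : Set Ordinal}
    (hS : myUnbnd κ S) (hsub : S ⊆ ⋃ i, g i) (hg : ∀ i, g i ⊆ S) :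
    ∃ i, myUnbnd κ (g i) := by
  by_contra hc
  push_neg at hc
  have : ∀ i, myBdd κ (g i) := fun i => myBdd_of_not_unbnd ((hg i).trans hS.1) (hc i)
  exact hS.2 (myBdd_mono hsub (myBdd_iUnion hreg hunc this))

/-- Weak Δ-system lemma: from an unbounded family of finite sets of bounded size we can
extract an unbounded subfamily with a common root, outside of which every point appears
only boundedly often. -/
lemma myWeakDelta {κ : Cardinal.{u}} (hreg : κ.IsRegular) (hunc : Cardinal.aleph0 < κ) :
    ∀ (n : ℕ) (S : Set Ordinal) (f : Ordinal → Set (Set ℕ)),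
    myUnbnd κ S → (∀ i ∈ S, (f i).Finite) → (∀ i ∈ S, (f i).ncard ≤ n) →
    ∃ R : Set (Set ℕ), R.Finite ∧ ∃ T, T ⊆ S ∧ myUnbnd κ T ∧ (∀ i ∈ T, R ⊆ f i) ∧
      ∀ x ∉ R, myBdd κ {i ∈ T | x ∈ f i} := by
  intro n
  induction n with
  | zero =>
    intro S f hS hfin hcard
    refine ⟨∅, Set.finite_empty, S, subset_rfl, hS, fun i _ => Set.empty_subset _,
      fun x _ => ?_⟩
    have he : {i ∈ S | x ∈ f i} = ∅ := by
      ext i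
      simp only [Set.mem_setOf_eq, Set.mem_empty_iff_false, iff_false, not_and]
      intro hi hx
      have h0 : (f i).ncard = 0 := le_antisymm (hcard i hi) (Nat.zero_le _)
      rw [(Set.ncard_eq_zero (hfin i hi)).mp h0] at hx
      exact hx
    rw [he]
    exact ⟨0, hreg.ord_pos, by simp⟩
  | succ n ih =>
    intro S f hS hfin hcard
    by_cases hA : ∃ x : Set ℕ, myUnbnd κ {i ∈ S | x ∈ f i}
    · obtain ⟨x, hx⟩ := hA
      have hsub : {i ∈ S | x ∈ f i} ⊆ S := Set.sep_subset _ _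
      obtain ⟨R', hR'fin, T, hTsub, hTunb, hTsup, hTbdd⟩ :=
        ih {i ∈ S | x ∈ f i} (fun i => f i \ {x}) hx
          (fun i hi => (hfin i (hsub hi)).diff)
          (fun i hi => by
            show (f i \ {x}).ncard ≤ n
            have h1 := Set.ncard_diff_singleton_add_one hi.2 (hfin i hi.1)
            have h2 := hcard i hi.1
            omega)
      refine ⟨insert x R', hR'fin.insert x, T, hTsub.trans hsub, hTunb, ?_, ?_⟩
      · intro i hi
        have hx' : x ∈ f i := (hTsub hi).2
        have hR' : R' ⊆ f i := (hTsup i hi).trans Set.diff_subset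
        exact Set.insert_subset hx' hR'
      · intro y hy
        simp only [Set.mem_insert_iff, not_or] at hy
        refine myBdd_mono ?_ (hTbdd y hy.2)
        intro i hi
        exact ⟨hi.1, hi.2, by simp [hy.1]⟩
    · push_neg at hA
      refine ⟨∅, Set.finite_empty, S, subset_rfl, hS, fun i _ => Set.empty_subset _,
        fun x _ => ?_⟩
      exact myBdd_of_not_unbnd (fun i hi => hS.1 hi.1) (hA x)

end Aux

theorem statement2 (κ : Cardinal) (hreg : κ.IsRegular) (hunc : Cardinal.aleph0 < κ)
    (I : Ordinal → Set (Set ℕ))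
    (hindep : ∀ α < κ.ord, Indep (I α))
    (hmono : ∀ α β : Ordinal, α ≤ β → β < κ.ord → I α ⊆ I β)
    (hcont : ∀ β < κ.ord, Order.IsSuccLimit β → I β = ⋃ α < β, I α) :
    densityFil (⋃ α < κ.ord, I α) = ⋃ α < κ.ord, densityFil (I α) := by
  classical
  apply Set.Subset.antisymm
  · -- hard direction
    intro X hX
    by_contra hnot
    have hnot' : ∀ α, α < κ.ord → X ∉ densityFil (I α) := by
      intro α hα hmem
      exact hnot (Set.mem_iUnion₂.mpr ⟨α, hα, hmem⟩)
    have hbadall : ∀ α, α < κ.ord → ∃ h, FF (I α) h ∧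
        ∀ h', FF (I α) h' → ExtFF h h' → ¬ (BC h' \ X).Finite := by
      intro α hα
      have h1 := hnot' α hα
      simp only [densityFil, Set.mem_setOf_eq] at h1
      push_neg at h1
      obtain ⟨h, hh, hbad⟩ := h1
      exact ⟨h, hh, fun h' h1' h2' h3' => hbad h' h1' h2' h3'⟩
    choose! h hFF hbad using hbadall
    set D : Ordinal → Set (Set ℕ) := fun α => {A | h α A ≠ none} with hD
    -- Step 1 : stabilize the cardinality of the domains on an unbounded set
    have hIio : myUnbnd κ (Set.Iio κ.ord) :=
      ⟨subset_rfl, by rintro ⟨γ, hγ, hb⟩; exact absurd (hb γ hγ) (lt_irrefl γ)⟩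
    obtain ⟨n, hn⟩ := myUnbnd_of_iUnion hreg hunc
      (g := fun n : ℕ => {α | α < κ.ord ∧ (D α).ncard = n}) hIio
      (fun α hα => Set.mem_iUnion.mpr ⟨(D α).ncard, hα, rfl⟩)
      (fun n α hα => hα.1)
    -- Step 2 : weak Δ-system
    obtain ⟨R, hRfin, T, hTsub, hTunb, hTsup, hTbdd⟩ :=
      myWeakDelta hreg hunc n {α | α < κ.ord ∧ (D α).ncard = n} D hn
        (fun α hα => (hFF α hα.1).1) (fun α hα => le_of_eq hα.2)
    have hTκ : ∀ α ∈ T, α < κ.ord := fun α hα => (hTsub hα).1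
    -- Step 3 : stabilize the values of `h α` on `R`
    haveI := hRfin.to_subtype
    obtain ⟨v, hv⟩ := myUnbnd_of_iUnion hreg hunc
      (g := fun v : ↥R → Bool => {α ∈ T | ∀ A : ↥R, h α A.1 = some (v A)}) hTunb
      (by
        intro α hα
        have hsup := hTsup α hα
        have : ∀ A : ↥R, ∃ b : Bool, h α A.1 = some b :=
          fun A => Option.ne_none_iff_exists'.mp (hsup A.2)
        choose w hw using this
        exact Set.mem_iUnion.mpr ⟨w, hα, hw⟩)
      (fun w α hα => hα.1)
    set T₂ : Set Ordinal := {α ∈ T | ∀ A : ↥R, h α A.1 = some (v A)} with hT₂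
    have hT₂T : T₂ ⊆ T := fun α hα => hα.1
    -- the root as a finite partial function
    set r : Set ℕ → Option Bool := fun A => if hA : A ∈ R then some (v ⟨A, hA⟩) else none
      with hr
    have hrdom : ∀ A : Set ℕ, r A ≠ none → A ∈ R := by
      intro A hA
      by_contra hc
      rw [hr] at hA
      simp only [dif_neg hc] at hA
      exact hA rfl
    have hrFF : FF (⋃ α, ⋃ (_ : α < κ.ord), I α) r := by
      constructor
      · exact hRfin.subset (fun A hA => hrdom A hA)
      · intro A hA
        have hAR : A ∈ R := hrdom A hA
        obtain ⟨α₀, hα₀T, _⟩ := myUnbnd_exists hreg.aleph0_le hv 0 hreg.ord_pos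
        have hα₀ : α₀ < κ.ord := hv.1 hα₀T
        have h1 : A ∈ D α₀ := hTsup α₀ (hT₂T hα₀T) hAR
        exact Set.mem_iUnion₂.mpr ⟨α₀, hα₀, (hFF α₀ hα₀).2 A h1⟩
    obtain ⟨k, hkFF, hkExt, hkFin⟩ := hX r hrFF
    -- a bound for the domain of k
    haveI := hkFF.1.to_subtype
    have hdom : ∀ A : ↥{A | k A ≠ none}, ∃ γ, γ < κ.ord ∧ A.1 ∈ I γ := by
      intro A
      obtain ⟨γ, hγ1, hγ2⟩ := Set.mem_iUnion₂.mp (hkFF.2 A.1 A.2)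
      exact ⟨γ, hγ1, hγ2⟩
    choose gA hglt hgmem using hdom
    have hγ₁ : (⨆ A, gA A) < κ.ord := mySup_lt hreg hunc gA hglt
    -- a bound for the petals meeting the domain of k
    obtain ⟨γ₂, hγ₂, hγ₂b⟩ : myBdd κ (⋃ A : ↥{A | k A ≠ none},
        if A.1 ∈ R then (∅ : Set Ordinal) else {α ∈ T₂ | A.1 ∈ D α}) := by
      apply myBdd_iUnion hreg hunc
      intro A
      by_cases hAR : A.1 ∈ R
      · rw [if_pos hAR]; exact ⟨0, hreg.ord_pos, by simp⟩
      · rw [if_neg hAR]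
        refine myBdd_mono ?_ (hTbdd A.1 hAR)
        intro α hα
        exact ⟨hT₂T hα.1, hα.2⟩
    -- select a level α beyond both bounds
    have hmax : max (⨆ A, gA A) γ₂ < κ.ord := max_lt hγ₁ hγ₂
    obtain ⟨α, hαT₂, hαgt⟩ := myUnbnd_exists hreg.aleph0_le hv _ hmax
    have hακ : α < κ.ord := hv.1 hαT₂
    -- the combined condition
    set k' : Set ℕ → Option Bool := fun A => (h α A).elim (k A) some with hk'
    have hk'ext : ExtFF (h α) k' := by
      intro A b hb
      simp only [hk', hb, Option.elim]
    have hk'none : ∀ A, h α A = none → k' A = k A := by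
      intro A hb
      simp only [hk', hb, Option.elim]
    have hk'FF : FF (I α) k' := by
      constructor
      · apply ((hFF α hακ).1.union hkFF.1).subset
        intro A hA
        cases hh : h α A with
        | some b => exact Or.inl (by simp [hD, hh])
        | none =>
          right
          rw [Set.mem_setOf_eq] at hA ⊢
          rwa [hk'none A hh] at hA
      · intro A hA
        cases hh : h α A with
        | some b => exact (hFF α hακ).2 A (by simp [hh])
        | none =>
          rw [hk'none A hh] at hA
          have hAd : A ∈ {A | k A ≠ none} := hA
          have hle : gA ⟨A, hAd⟩ ≤ α :=
            le_of_lt (lt_of_le_of_lt ((Ordinal.le_iSup gA ⟨A, hAd⟩).trans (le_max_left _ _)) hαgt)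
          exact hmono _ _ hle hακ (hgmem ⟨A, hAd⟩)
    have hkk' : ExtFF k k' := by
      intro A b hb
      cases hh : h α A with
      | none => rw [hk'none A hh]; exact hb
      | some b' =>
        have hAd : A ∈ {A | k A ≠ none} := by simp [hb]
        have hADα : A ∈ D α := by simp [hD, hh]
        have hAR : A ∈ R := by
          by_contra hAR
          have hmem : α ∈ ⋃ A : ↥{A | k A ≠ none},
              (if A.1 ∈ R then (∅ : Set Ordinal) else {β ∈ T₂ | A.1 ∈ D β}) := by
            refine Set.mem_iUnion.mpr ⟨⟨A, hAd⟩, ?_⟩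
            rw [if_neg hAR]
            exact ⟨hαT₂, hADα⟩
          exact absurd (hγ₂b α hmem)
            (not_lt.mpr ((le_max_right (⨆ A, gA A) γ₂).trans hαgt.le))
        have h1 : h α A = some (v ⟨A, hAR⟩) := hαT₂.2 ⟨A, hAR⟩
        have h2 : k A = some (v ⟨A, hAR⟩) := by
          apply hkExt
          rw [hr]
          simp only [dif_pos hAR]
        rw [hb] at h2
        have hb2 : b = v ⟨A, hAR⟩ := Option.some.inj h2
        rw [hk'ext A b' hh, hh.symm.trans h1, hb2]
    exact hbad α hακ k' hk'FF hk'ext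
      (hkFin.subset (Set.diff_subset_diff_left (myBC_anti hkk')))
  · -- easy direction : each densityFil (I α) is contained in densityFil of the union
    intro X hX
    obtain ⟨α, hα, hXα⟩ := Set.mem_iUnion₂.mp hX
    intro h hFFh
    set h₀ : Set ℕ → Option Bool := fun A => if A ∈ I α then h A else none with hh₀
    have hFF₀ : FF (I α) h₀ := by
      constructor
      · apply hFFh.1.subset
        intro A hA
        by_cases hAI : A ∈ I α
        · simpa only [Set.mem_setOf_eq, hh₀, if_pos hAI] using hA
        · simp only [Set.mem_setOf_eq, hh₀, ne_eq, ite_ne_right_iff] at hA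
          exact absurd hA.1 hAI
      · intro A hA
        by_cases hAI : A ∈ I α
        · exact hAI
        · simp only [hh₀, ne_eq, ite_ne_right_iff] at hA
          exact absurd hA.1 hAI
    obtain ⟨h₀', hFF₀', hExt₀', hFin₀⟩ := hXα h₀ hFF₀
    set h' : Set ℕ → Option Bool := fun A => if A ∈ I α then h₀' A else h A with hh'
    refine ⟨h', ⟨?_, ?_⟩, ?_, ?_⟩
    · apply (hFF₀'.1.union hFFh.1).subset
      intro A hA
      by_cases hAI : A ∈ I α
      · exact Or.inl (by simpa only [Set.mem_setOf_eq, hh', if_pos hAI] using hA)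
      · exact Or.inr (by simpa only [Set.mem_setOf_eq, hh', if_neg hAI] using hA)
    · intro A hA
      by_cases hAI : A ∈ I α
      · exact Set.mem_iUnion₂.mpr ⟨α, hα, hAI⟩
      · refine hFFh.2 A ?_
        simpa only [hh', if_neg hAI] using hA
    · intro A b hb
      by_cases hAI : A ∈ I α
      · have h1 : h₀ A = some b := by
          simp only [hh₀, if_pos hAI]
          exact hb
        have h2 := hExt₀' A b h1
        simp only [hh', if_pos hAI]
        exact h2
      · simp only [hh', if_neg hAI]
        exact hb
    · refine hFin₀.subset (Set.diff_subset_diff_left (myBC_anti ?_))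
      intro A b hb
      have hAI : A ∈ I α := hFF₀'.2 A (by simp [hb])
      simp only [hh', if_pos hAI]
      exact hb
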